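/- Let n ≥ 2 be an integer and let P be a real with 1/(n+1) < P ≤ 1. Define γ(P) = √(P/2 − 1/(2(n+1))) if 1/(n+1) < P ≤ (n+3)/(n+1)², and γ(P) = 1/(2n) + (1/2)·√((1 − 1/n)·(P − 1/n)) if (n+3)/(n+1)² ≤ P ≤ 1. Then the maximum of λ_1 − λ_{n+1} − 2·∑_{j=2}^n √(λ_j·λ_{2n+2−j}) over all λ ∈ ℝ^{2n} with λ_1 ≥ λ_2 ≥ … ≥ λ_{2n} ≥ 0, ∑_{k=1}^{2n} λ_k = 1 and ∑_{k=1}^{2n} λ_k² = P, is attained and equals 2·γ(P). Consequently, the maximal GM-concurrence attainable by an N-qubit X-state of purity P (n = 2^{N−1}) is 2·γ(P). -/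

import Mathlib

/-- The optimal value parameter `γ(P)` for the `N`-qubit X-MEMS with respect to purity `P`
(`n = 2^{N-1}`). -/
noncomputable def gammaP (n : ℕ) (P : ℝ) : ℝ :=
  if P ≤ ((n : ℝ) + 3) / ((n : ℝ) + 1) ^ 2 then
    Real.sqrt (P / 2 - 1 / (2 * ((n : ℝ) + 1)))
  else
    1 / (2 * (n : ℝ)) + (1 / 2) * Real.sqrt ((1 - 1 / (n : ℝ)) * (P - 1 / (n : ℝ)))

section XmemsHelpers

lemma xmems_sqrt_add_le (x y : ℝ) (hx : 0 ≤ x) (hy : 0 ≤ y) :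
    Real.sqrt (x + y) ≤ Real.sqrt x + Real.sqrt y := by
  have h : x + y ≤ (Real.sqrt x + Real.sqrt y) ^ 2 := by
    rw [add_sq, Real.sq_sqrt hx, Real.sq_sqrt hy]
    nlinarith [mul_nonneg (Real.sqrt_nonneg x) (Real.sqrt_nonneg y)]
  calc Real.sqrt (x + y) ≤ Real.sqrt ((Real.sqrt x + Real.sqrt y) ^ 2) := Real.sqrt_le_sqrt h
    _ = Real.sqrt x + Real.sqrt y := Real.sqrt_sq (by positivity)

lemma xmems_sqrt_sum_le (s : Finset ℕ) (f : ℕ → ℝ) (h : ∀ i ∈ s, 0 ≤ f i) :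
    Real.sqrt (∑ i ∈ s, f i) ≤ ∑ i ∈ s, Real.sqrt (f i) := by
  induction s using Finset.cons_induction with
  | empty => simp
  | cons a s ha ih =>
    rw [Finset.sum_cons, Finset.sum_cons]
    have h1 : 0 ≤ f a := h a (Finset.mem_cons_self a s)
    have h2 : ∀ i ∈ s, 0 ≤ f i := fun i hi => h i (Finset.mem_cons_of_mem hi)
    calc Real.sqrt (f a + ∑ i ∈ s, f i)
        ≤ Real.sqrt (f a) + Real.sqrt (∑ i ∈ s, f i) :=
          xmems_sqrt_add_le _ _ h1 (Finset.sum_nonneg h2)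
      _ ≤ Real.sqrt (f a) + ∑ i ∈ s, Real.sqrt (f i) := by linarith [ih h2]

lemma xmems_sum_split (n : ℕ) (hn : 2 ≤ n) (g : ℕ → ℝ) :
    ∑ k ∈ Finset.range (2 * n), g k
      = g 0 + (∑ j ∈ Finset.Ico 1 n, (g j + g (2 * n - j))) + g n := by
  have h1 : ∑ j ∈ Finset.Ico (n + 1) (2 * n), g j
      = ∑ j ∈ Finset.Ico 1 n, g (2 * n - j) := by
    apply Finset.sum_nbij' (i := fun j => 2 * n - j) (j := fun j => 2 * n - j)
    · intro a ha; simp only [Finset.mem_Ico] at *; omega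
    · intro a ha; simp only [Finset.mem_Ico] at *; omega
    · intro a ha; simp only [Finset.mem_Ico] at *; omega
    · intro a ha; simp only [Finset.mem_Ico] at *; omega
    · intro a ha; simp only [Finset.mem_Ico] at ha
      congr 1; omega
  rw [Finset.range_eq_Ico,
    ← Finset.sum_Ico_consecutive g (by omega : (0:ℕ) ≤ 1) (by omega : 1 ≤ 2*n),
    ← Finset.sum_Ico_consecutive g (by omega : (1:ℕ) ≤ n) (by omega : n ≤ 2*n),
    ← Finset.sum_Ico_consecutive g (by omega : n ≤ n+1) (by omega : n+1 ≤ 2*n),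
    h1, Finset.sum_add_distrib]
  rw [Finset.sum_Ico_eq_sum_range, Finset.sum_Ico_eq_sum_range]
  simp [Finset.sum_range_one]
  ring

lemma xmems_alg_hkey2 (nn a c X : ℝ) (hn2 : 2 ≤ nn)
    (hCS : (1 - a - c)^2 ≤ (nn - 1) * X) :
    2 ≤ ((a + c)^2 + 2 * X) * (nn + 1) := by
  nlinarith [sq_nonneg ((nn + 1) * (a + c) - 2),
    mul_le_mul_of_nonneg_left hCS (show (0:ℝ) ≤ 2 * (nn + 1) by linarith)]

lemma xmems_alg_hkey (nn a c X P Pi : ℝ)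
    (hQP : a^2 + c^2 + X = P + 2 * Pi)
    (hkey2 : 2 / (nn + 1) ≤ (a + c)^2 + 2 * X) :
    (a - c)^2 ≤ (2 * P - 2 / (nn + 1)) + 4 * Pi := by
  nlinarith [hQP, hkey2]

lemma xmems_alg_s1 (d A : ℝ) (hA0 : 0 ≤ A) (h : 0 ≤ d - A) : (d - A)^2 ≤ d^2 - A^2 := by
  nlinarith [mul_nonneg hA0 h]

lemma xmems_alg_s2 (nn u A : ℝ)
    (h1 : 0 ≤ u - A) (h4 : 0 ≤ (nn + 1) * (u + A) - 4) :
    (nn - 1) * A^2 + 2*(1 - A)^2 ≤ (nn - 1) * u^2 + 2*(1 - u)^2 := by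
  nlinarith [mul_nonneg h1 h4]

lemma xmems_alg_s5 (nn u A X P : ℝ) (hn1 : 0 < nn - 1)
    (hCS : (1 - u)^2 ≤ (nn - 1) * X)
    (s2 : (nn - 1) * A^2 + 2*(1 - A)^2 ≤ (nn - 1) * u^2 + 2*(1 - u)^2)
    (s3 : 2*(nn - 1)*A^2 + 2*(1 - A)^2 = 2*(nn - 1)*P) :
    2 * P ≤ u^2 + A^2 + 2*X := by
  have h : 0 ≤ (nn - 1) * (u^2 + A^2 + 2*X - 2*P) := by nlinarith [hCS, s2, s3]
  have := nonneg_of_mul_nonneg_left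
    (by linarith : 0 ≤ (u^2 + A^2 + 2*X - 2*P) * (nn - 1)) hn1
  linarith

lemma xmems_alg_key (a c A X P Pi : ℝ)
    (s1 : (a - c - A)^2 ≤ (a - c)^2 - A^2)
    (s5 : 2*P ≤ (a + c)^2 + A^2 + 2*X)
    (hQP : a^2 + c^2 + X = P + 2 * Pi) :
    (a - c - A)^2 ≤ 4 * Pi := by
  nlinarith [s1, s5, hQP]

/-- The step spectrum used to attain the maximum. -/
noncomputable def xmemsStep (n : ℕ) (v0 v1 v2 : ℝ) : ℕ → ℝ := fun i =>
  if i = 0 then v0 else if i < n then v1 else if i = n then v2 else 0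

lemma xmemsStep_zero (n : ℕ) (v0 v1 v2 : ℝ) : xmemsStep n v0 v1 v2 0 = v0 := by
  simp [xmemsStep]

lemma xmemsStep_n (n : ℕ) (hn : 2 ≤ n) (v0 v1 v2 : ℝ) : xmemsStep n v0 v1 v2 n = v2 := by
  simp only [xmemsStep]
  rw [if_neg (by omega), if_neg (by omega)]
  simp

lemma xmemsStep_mid (n : ℕ) (v0 v1 v2 : ℝ) {j : ℕ} (h1 : 1 ≤ j) (h2 : j < n) :
    xmemsStep n v0 v1 v2 j = v1 := by
  simp only [xmemsStep]
  rw [if_neg (by omega), if_pos h2]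

lemma xmemsStep_tail (n : ℕ) (v0 v1 v2 : ℝ) {j : ℕ} (h1 : n < j) :
    xmemsStep n v0 v1 v2 j = 0 := by
  simp only [xmemsStep]
  rw [if_neg (by omega), if_neg (by omega), if_neg (by omega)]

lemma xmemsStep_mono (n : ℕ) (hn : 2 ≤ n) (v0 v1 v2 : ℝ)
    (h01 : v1 ≤ v0) (h12 : v2 ≤ v1) (h2 : 0 ≤ v2) :
    ∀ i j : ℕ, i ≤ j → j < 2 * n → xmemsStep n v0 v1 v2 j ≤ xmemsStep n v0 v1 v2 i := by
  intro i j hij _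
  simp only [xmemsStep]
  split_ifs <;> first | linarith | omega

lemma xmemsStep_nonneg (n : ℕ) (hn : 2 ≤ n) (v0 v1 v2 : ℝ)
    (h01 : v1 ≤ v0) (h12 : v2 ≤ v1) (h2 : 0 ≤ v2) :
    ∀ i, i < 2 * n → 0 ≤ xmemsStep n v0 v1 v2 i := by
  intro i _
  simp only [xmemsStep]
  split_ifs <;> linarith

lemma xmemsStep_sum (n : ℕ) (hn : 2 ≤ n) (v0 v1 v2 : ℝ) (φ : ℝ → ℝ) (hφ : φ 0 = 0) :
    ∑ k ∈ Finset.range (2 * n), φ (xmemsStep n v0 v1 v2 k)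
      = φ v0 + ((n : ℝ) - 1) * φ v1 + φ v2 := by
  rw [xmems_sum_split n hn]
  rw [xmemsStep_zero, xmemsStep_n n hn]
  have h : ∑ j ∈ Finset.Ico 1 n,
        (φ (xmemsStep n v0 v1 v2 j) + φ (xmemsStep n v0 v1 v2 (2 * n - j)))
      = ∑ j ∈ Finset.Ico 1 n, φ v1 := by
    apply Finset.sum_congr rfl
    intro j hj
    simp only [Finset.mem_Ico] at hj
    rw [xmemsStep_mid n v0 v1 v2 hj.1 hj.2,
      xmemsStep_tail n v0 v1 v2 (by omega : n < 2*n - j), hφ, add_zero]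
  rw [h, Finset.sum_const, Nat.card_Ico, nsmul_eq_mul]
  have h1 : ((n - 1 : ℕ) : ℝ) = (n : ℝ) - 1 := by
    have : (1:ℕ) ≤ n := by omega
    push_cast [this]; ring
  rw [h1]

lemma xmemsStep_cross (n : ℕ) (hn : 2 ≤ n) (v0 v1 v2 : ℝ) :
    ∑ j ∈ Finset.Ico 1 n,
      Real.sqrt (xmemsStep n v0 v1 v2 j * xmemsStep n v0 v1 v2 (2 * n - j)) = 0 := by
  apply Finset.sum_eq_zero
  intro j hj
  simp only [Finset.mem_Ico] at hj
  rw [xmemsStep_tail n v0 v1 v2 (by omega : n < 2*n - j), mul_zero, Real.sqrt_zero]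

lemma xmems_upper (n : ℕ) (hn : 2 ≤ n) (P : ℝ)
    (hP1 : 1 / ((n : ℝ) + 1) < P) (hP2 : P ≤ 1)
    (lam : ℕ → ℝ)
    (hsort : ∀ i j, i ≤ j → j < 2 * n → lam j ≤ lam i)
    (hpos : ∀ i < 2 * n, 0 ≤ lam i)
    (hsum : ∑ k ∈ Finset.range (2 * n), lam k = 1)
    (hsq : ∑ k ∈ Finset.range (2 * n), (lam k) ^ 2 = P) :
    lam 0 - lam n - 2 * ∑ j ∈ Finset.Ico 1 n, Real.sqrt (lam j * lam (2 * n - j))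
      ≤ 2 * gammaP n P := by
  have hn2 : (2:ℝ) ≤ (n:ℝ) := by exact_mod_cast hn
  have hn0 : (0:ℝ) < (n:ℝ) := by linarith
  have hn1 : (0:ℝ) < (n:ℝ) - 1 := by linarith
  have hS : lam 0 + (∑ j ∈ Finset.Ico 1 n, (lam j + lam (2 * n - j))) + lam n = 1 := by
    rw [← xmems_sum_split n hn lam]; exact hsum
  have hQ : (lam 0)^2 + (∑ j ∈ Finset.Ico 1 n, ((lam j)^2 + (lam (2 * n - j))^2))
      + (lam n)^2 = P := by
    rw [← xmems_sum_split n hn (fun k => (lam k)^2)]; exact hsq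
  set Pi := ∑ j ∈ Finset.Ico 1 n, lam j * lam (2 * n - j) with hPidef
  set X := ∑ j ∈ Finset.Ico 1 n, (lam j + lam (2 * n - j))^2 with hXdef
  have hmem : ∀ j ∈ Finset.Ico 1 n, 0 ≤ lam j ∧ 0 ≤ lam (2 * n - j) := by
    intro j hj
    simp only [Finset.mem_Ico] at hj
    exact ⟨hpos j (by omega), hpos _ (by omega)⟩
  have hPi0 : 0 ≤ Pi :=
    Finset.sum_nonneg fun j hj => mul_nonneg (hmem j hj).1 (hmem j hj).2
  have hXQ : X = (∑ j ∈ Finset.Ico 1 n, ((lam j)^2 + (lam (2 * n - j))^2)) + 2 * Pi := by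
    rw [hXdef, hPidef, Finset.mul_sum, ← Finset.sum_add_distrib]
    apply Finset.sum_congr rfl
    intro j hj; ring
  have hQP : (lam 0)^2 + (lam n)^2 + X = P + 2 * Pi := by
    rw [hXQ]; linarith [hQ]
  have hCS : (1 - lam 0 - lam n)^2 ≤ ((n:ℝ) - 1) * X := by
    have hS' : ∑ j ∈ Finset.Ico 1 n, (lam j + lam (2 * n - j)) = 1 - lam 0 - lam n := by
      linarith [hS]
    have hcs := sq_sum_le_card_mul_sum_sq
      (s := Finset.Ico 1 n) (f := fun j => lam j + lam (2 * n - j)) (α := ℝ)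
    rw [hS'] at hcs
    have hcard : ((Finset.Ico 1 n).card : ℝ) = (n:ℝ) - 1 := by
      rw [Nat.card_Ico]
      have h1 : (1:ℕ) ≤ n := by omega
      push_cast [h1]; ring
    rw [hcard] at hcs
    exact hcs
  have hc0 : 0 ≤ lam n := hpos n (by omega)
  have hca : lam n ≤ lam 0 := hsort 0 n (by omega) (by omega)
  have hmidnn : 0 ≤ ∑ j ∈ Finset.Ico 1 n, (lam j + lam (2 * n - j)) :=
    Finset.sum_nonneg fun j hj => by linarith [(hmem j hj).1, (hmem j hj).2]
  have hucb : lam 0 + lam n ≤ 1 := by linarith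
  have hsqrtPi : Real.sqrt Pi ≤ ∑ j ∈ Finset.Ico 1 n, Real.sqrt (lam j * lam (2 * n - j)) :=
    xmems_sqrt_sum_le _ _ fun j hj => mul_nonneg (hmem j hj).1 (hmem j hj).2
  by_cases hcase : P ≤ ((n:ℝ) + 3) / ((n:ℝ) + 1) ^ 2
  · rw [gammaP, if_pos hcase]
    have hPn : 0 < 2 * P - 2 / ((n:ℝ) + 1) := by
      have e : 2 / ((n:ℝ) + 1) = 2 * (1 / ((n:ℝ) + 1)) := by ring
      linarith
    have h2γ : 2 * Real.sqrt (P / 2 - 1 / (2 * ((n:ℝ) + 1)))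
        = Real.sqrt (2 * P - 2 / ((n:ℝ) + 1)) := by
      rw [show 2 * P - 2 / ((n:ℝ) + 1) = 2 ^ 2 * (P / 2 - 1 / (2 * ((n:ℝ) + 1))) by
        field_simp]
      rw [Real.sqrt_mul (by positivity), Real.sqrt_sq (by norm_num)]
    rw [h2γ]
    have hkey2 : 2 / ((n:ℝ) + 1) ≤ (lam 0 + lam n)^2 + 2 * X := by
      rw [div_le_iff₀ (by linarith : (0:ℝ) < (n:ℝ) + 1)]
      exact xmems_alg_hkey2 (n:ℝ) (lam 0) (lam n) X hn2 hCS
    have hkey : (lam 0 - lam n)^2 ≤ (2 * P - 2 / ((n:ℝ) + 1)) + 4 * Pi :=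
      xmems_alg_hkey (n:ℝ) (lam 0) (lam n) X P Pi hQP hkey2
    have hfin : lam 0 - lam n
        ≤ Real.sqrt (2 * P - 2 / ((n:ℝ) + 1)) + 2 * Real.sqrt Pi := by
      have h1 : lam 0 - lam n = Real.sqrt ((lam 0 - lam n)^2) :=
        (Real.sqrt_sq (by linarith)).symm
      rw [h1]
      calc Real.sqrt ((lam 0 - lam n)^2)
          ≤ Real.sqrt ((2 * P - 2 / ((n:ℝ) + 1)) + 4 * Pi) := Real.sqrt_le_sqrt hkey
        _ ≤ Real.sqrt (2 * P - 2 / ((n:ℝ) + 1)) + Real.sqrt (4 * Pi) :=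
            xmems_sqrt_add_le _ _ (le_of_lt hPn) (by linarith)
        _ = Real.sqrt (2 * P - 2 / ((n:ℝ) + 1)) + 2 * Real.sqrt Pi := by
            rw [show (4:ℝ) * Pi = 2 ^ 2 * Pi by ring, Real.sqrt_mul (by positivity),
              Real.sqrt_sq (by norm_num)]
    linarith [hsqrtPi, hfin]
  · push_neg at hcase
    rw [gammaP, if_neg (not_le.mpr hcase)]
    have hth : 1 / (n:ℝ) ≤ ((n:ℝ) + 3) / ((n:ℝ) + 1) ^ 2 := by
      rw [div_le_div_iff₀ hn0 (by positivity)]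
      nlinarith [hn2]
    have hP1n : 1 / (n:ℝ) < P := lt_of_le_of_lt hth hcase
    have h1n : 1 / (n:ℝ) ≤ 1 := by rw [div_le_one hn0]; linarith
    have harg : 0 ≤ (1 - 1 / (n:ℝ)) * (P - 1 / (n:ℝ)) := by
      apply mul_nonneg <;> linarith
    set σ : ℝ := Real.sqrt ((1 - 1 / (n:ℝ)) * (P - 1 / (n:ℝ))) with hσdef
    have hσ2 : σ ^ 2 = (1 - 1 / (n:ℝ)) * (P - 1 / (n:ℝ)) := Real.sq_sqrt harg
    have hσ0 : 0 ≤ σ := Real.sqrt_nonneg _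
    set A : ℝ := 1 / (n:ℝ) + σ with hAdef
    have hA0 : 0 ≤ A := by positivity
    have hPeq : P = 1 / (n:ℝ) + (n:ℝ) * σ^2 / ((n:ℝ) - 1) := by
      rw [hσ2]; field_simp; ring
    have hA2 : 2 ≤ ((n:ℝ) + 1) * A := by
      have hstep : ((n:ℝ) - 1) / ((n:ℝ) * ((n:ℝ) + 1)) ≤ σ := by
        rw [hσdef]
        rw [show ((n:ℝ) - 1) / ((n:ℝ) * ((n:ℝ) + 1)) =
          Real.sqrt ((((n:ℝ) - 1) / ((n:ℝ) * ((n:ℝ) + 1)))^2) from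
          (Real.sqrt_sq (by positivity)).symm]
        apply Real.sqrt_le_sqrt
        have e1 : (1 - 1/(n:ℝ)) = ((n:ℝ) - 1) / (n:ℝ) := by field_simp
        have e2 : ((n:ℝ)+3)/((n:ℝ)+1)^2 - 1/(n:ℝ) = ((n:ℝ) - 1) / ((n:ℝ) * ((n:ℝ)+1)^2) := by
          field_simp; ring
        have e3 : (((n:ℝ) - 1) / ((n:ℝ) * ((n:ℝ) + 1)))^2
            = (((n:ℝ) - 1) / (n:ℝ)) * (((n:ℝ) - 1) / ((n:ℝ) * ((n:ℝ)+1)^2)) := by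
          field_simp
        rw [e3, ← e1]
        apply mul_le_mul_of_nonneg_left _ (by linarith)
        linarith [e2, hcase]
      have e4 : 2 / ((n:ℝ)+1) - 1/(n:ℝ) = ((n:ℝ) - 1) / ((n:ℝ) * ((n:ℝ) + 1)) := by
        field_simp; ring
      have h5 : 2 / ((n:ℝ)+1) ≤ A := by rw [hAdef]; linarith
      calc (2:ℝ) = ((n:ℝ)+1) * (2 / ((n:ℝ)+1)) := by field_simp
        _ ≤ ((n:ℝ)+1) * A := mul_le_mul_of_nonneg_left h5 (by linarith)
    have hgoal : 2 * (1 / (2 * (n:ℝ)) + 1 / 2 * σ) = A := by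
      rw [hAdef]; field_simp
    rw [hgoal]
    by_cases hd : lam 0 - lam n ≤ A
    · have hPsum : 0 ≤ ∑ j ∈ Finset.Ico 1 n, Real.sqrt (lam j * lam (2 * n - j)) :=
        Finset.sum_nonneg fun j hj => Real.sqrt_nonneg _
      linarith
    · push_neg at hd
      have hu : A ≤ lam 0 + lam n := by linarith
      have s1 : (lam 0 - lam n - A)^2 ≤ (lam 0 - lam n)^2 - A^2 :=
        xmems_alg_s1 _ _ hA0 (by linarith)
      have h4 : 0 ≤ ((n:ℝ)+1) * (lam 0 + lam n + A) - 4 := by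
        have h6 := mul_le_mul_of_nonneg_left hu (show (0:ℝ) ≤ (n:ℝ)+1 by linarith)
        linarith only [hA2, h6]
      have s2 : ((n:ℝ)-1) * A^2 + 2*(1-A)^2
          ≤ ((n:ℝ)-1) * (lam 0 + lam n)^2 + 2*(1-(lam 0 + lam n))^2 :=
        xmems_alg_s2 (n:ℝ) _ _ (by linarith) h4
      have s3 : 2*((n:ℝ)-1)*A^2 + 2*(1-A)^2 = 2*((n:ℝ)-1)*P := by
        rw [hAdef, hPeq]; field_simp; ring
      have s5 : 2*P ≤ (lam 0 + lam n)^2 + A^2 + 2*X :=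
        xmems_alg_s5 (n:ℝ) _ _ X P hn1
          (by linarith only [hCS, sq_nonneg (1 - lam 0 - lam n)] :
            (1 - (lam 0 + lam n))^2 ≤ ((n:ℝ)-1)*X) s2 s3
      have key : (lam 0 - lam n - A)^2 ≤ 4 * Pi :=
        xmems_alg_key _ _ _ X P Pi s1 s5 hQP
      have hfin2 : lam 0 - lam n - A ≤ 2 * Real.sqrt Pi := by
        have h1 : lam 0 - lam n - A = Real.sqrt ((lam 0 - lam n - A)^2) :=
          (Real.sqrt_sq (by linarith)).symm
        rw [h1]
        calc Real.sqrt ((lam 0 - lam n - A)^2) ≤ Real.sqrt (4 * Pi) :=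
            Real.sqrt_le_sqrt key
          _ = 2 * Real.sqrt Pi := by
            rw [show (4:ℝ) * Pi = 2 ^ 2 * Pi by ring, Real.sqrt_mul (by positivity),
              Real.sqrt_sq (by norm_num)]
      linarith [hsqrtPi, hfin2]

lemma xmems_mem (n : ℕ) (hn : 2 ≤ n) (P : ℝ)
    (hP1 : 1 / ((n : ℝ) + 1) < P) (hP2 : P ≤ 1) :
    ∃ lam : ℕ → ℝ,
      (∀ i j, i ≤ j → j < 2 * n → lam j ≤ lam i) ∧
      (∀ i < 2 * n, 0 ≤ lam i) ∧
      (∑ k ∈ Finset.range (2 * n), lam k = 1) ∧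
      (∑ k ∈ Finset.range (2 * n), (lam k) ^ 2 = P) ∧
      2 * gammaP n P = lam 0 - lam n -
        2 * ∑ j ∈ Finset.Ico 1 n, Real.sqrt (lam j * lam (2 * n - j)) := by
  have hn2 : (2:ℝ) ≤ (n:ℝ) := by exact_mod_cast hn
  have hn0 : (0:ℝ) < (n:ℝ) := by linarith
  have hn1' : (0:ℝ) < (n:ℝ) + 1 := by linarith
  by_cases hcase : P ≤ ((n : ℝ) + 3) / ((n : ℝ) + 1) ^ 2
  · -- regime 1
    set x : ℝ := 1 / ((n:ℝ) + 1) with hxdef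
    have hx : x * ((n:ℝ) + 1) = 1 := by rw [hxdef]; field_simp
    have hx0 : 0 ≤ x := by positivity
    set γ : ℝ := Real.sqrt (P / 2 - 1 / (2 * ((n : ℝ) + 1))) with hγdef
    have e : 1 / (2 * ((n:ℝ) + 1)) = x / 2 := by rw [hxdef]; field_simp
    have harg : 0 ≤ P / 2 - 1 / (2 * ((n : ℝ) + 1)) := by rw [e]; linarith
    have hγ2 : γ ^ 2 = P / 2 - x / 2 := by rw [hγdef, Real.sq_sqrt harg, e]
    have hγ0 : 0 ≤ γ := Real.sqrt_nonneg _
    have hγle : γ ≤ x := by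
      have h1 : P / 2 - 1 / (2 * ((n:ℝ) + 1)) ≤ x ^ 2 := by
        have e2 : ((n:ℝ) + 3) / ((n:ℝ) + 1) ^ 2 / 2 - 1 / (2 * ((n:ℝ) + 1)) = x ^ 2 := by
          rw [hxdef]; field_simp; ring
        linarith
      calc γ ≤ Real.sqrt (x ^ 2) := Real.sqrt_le_sqrt h1
        _ = x := Real.sqrt_sq hx0
    refine ⟨xmemsStep n (x + γ) x (x - γ), ?_, ?_, ?_, ?_, ?_⟩
    · exact xmemsStep_mono n hn _ _ _ (by linarith) (by linarith) (by linarith)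
    · exact xmemsStep_nonneg n hn _ _ _ (by linarith) (by linarith) (by linarith)
    · have hs := xmemsStep_sum n hn (x + γ) x (x - γ) (fun t => t) rfl
      rw [hs]
      linear_combination hx
    · have hs := xmemsStep_sum n hn (x + γ) x (x - γ) (fun t => t ^ 2) (by norm_num)
      rw [hs]
      linear_combination 2 * hγ2 + x * hx
    · rw [xmemsStep_cross n hn, xmemsStep_zero, xmemsStep_n n hn, gammaP, if_pos hcase,
        ← hγdef]
      ring
  · -- regime 2
    push_neg at hcase
    have hn1 : (0:ℝ) < (n:ℝ) - 1 := by linarith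
    have hth : 1 / (n:ℝ) ≤ ((n:ℝ) + 3) / ((n:ℝ) + 1) ^ 2 := by
      rw [div_le_div_iff₀ hn0 (by positivity)]
      nlinarith [hn2]
    have hP1n : 1 / (n:ℝ) < P := lt_of_le_of_lt hth hcase
    have h1n : 1 / (n:ℝ) ≤ 1 := by rw [div_le_one hn0]; linarith
    have harg : 0 ≤ (1 - 1 / (n:ℝ)) * (P - 1 / (n:ℝ)) := by
      apply mul_nonneg <;> linarith
    set σ : ℝ := Real.sqrt ((1 - 1 / (n:ℝ)) * (P - 1 / (n:ℝ))) with hσdef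
    have hσ2 : σ ^ 2 = (1 - 1 / (n:ℝ)) * (P - 1 / (n:ℝ)) := Real.sq_sqrt harg
    have hσ0 : 0 ≤ σ := Real.sqrt_nonneg _
    have hσle : σ ≤ 1 - 1 / (n:ℝ) := by
      calc σ ≤ Real.sqrt ((1 - 1/(n:ℝ))^2) := by
            apply Real.sqrt_le_sqrt
            nlinarith
        _ = 1 - 1/(n:ℝ) := Real.sqrt_sq (by linarith)
    set A : ℝ := 1 / (n:ℝ) + σ with hAdef
    have hnA : (n:ℝ) * A = 1 + (n:ℝ) * σ := by rw [hAdef]; field_simp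
    have hA0 : 0 ≤ A := by positivity
    have hA1 : A ≤ 1 := by rw [hAdef]; linarith
    set v1 : ℝ := (1 - A) / ((n:ℝ) - 1) with hv1def
    have hv10 : 0 ≤ v1 := div_nonneg (by linarith) (by linarith)
    have hv01 : v1 ≤ A := by
      rw [hv1def, div_le_iff₀ hn1]
      nlinarith [mul_nonneg (le_of_lt hn0) hσ0]
    have hPeq : P = 1 / (n:ℝ) + (n:ℝ) * σ^2 / ((n:ℝ) - 1) := by
      rw [hσ2]; field_simp; ring
    refine ⟨xmemsStep n A v1 0, ?_, ?_, ?_, ?_, ?_⟩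
    · exact xmemsStep_mono n hn _ _ _ hv01 hv10 le_rfl
    · exact xmemsStep_nonneg n hn _ _ _ hv01 hv10 le_rfl
    · have hs := xmemsStep_sum n hn A v1 0 (fun t => t) rfl
      rw [hs, hv1def]
      field_simp; ring
    · have hs := xmemsStep_sum n hn A v1 0 (fun t => t ^ 2) (by norm_num)
      rw [hs, hv1def, hAdef, hPeq]
      field_simp
      ring
    · rw [xmemsStep_cross n hn, xmemsStep_zero, xmemsStep_n n hn, gammaP,
        if_neg (not_le.mpr hcase), ← hσdef, hAdef]
      field_simp
      ring

end XmemsHelpers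

/-- For `1/(n+1) < P ≤ 1`, the maximum of
`λ_1 - λ_{n+1} - 2 ∑_{j=2}^n √(λ_j λ_{2n+2-j})` (0-based `lam`) over all sorted nonnegative
spectra `λ ∈ ℝ^{2n}` with `∑ λ_k = 1` and `∑ λ_k² = P` is attained and equals `2 γ(P)`:
the maximal GM-concurrence of an `N`-qubit X-state of purity `P` is `2 γ(P)`. -/
theorem xmems_purity_max (n : ℕ) (hn : 2 ≤ n) (P : ℝ)
    (hP1 : 1 / ((n : ℝ) + 1) < P) (hP2 : P ≤ 1) :
    IsGreatest
      {v : ℝ | ∃ lam : ℕ → ℝ,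
        (∀ i j, i ≤ j → j < 2 * n → lam j ≤ lam i) ∧
        (∀ i < 2 * n, 0 ≤ lam i) ∧
        (∑ k ∈ Finset.range (2 * n), lam k = 1) ∧
        (∑ k ∈ Finset.range (2 * n), (lam k) ^ 2 = P) ∧
        v = lam 0 - lam n -
          2 * ∑ j ∈ Finset.Ico 1 n, Real.sqrt (lam j * lam (2 * n - j))}
      (2 * gammaP n P) := by
  constructor
  · exact xmems_mem n hn P hP1 hP2
  · rintro v ⟨lam, hsort, hpos, hsum, hsq, rfl⟩
    exact xmems_upper n hn P hP1 hP2 lam hsort hpos hsum hsq
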